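/- The permutation obtained from a 132-avoiding permutation σ by the shift move σ^{σ_j} is again 132-avoiding. Precisely: let σ ∈ S_n be 132-avoiding and suppose there are indices i < j such that σ_i < σ_j, every entry strictly before position i is greater than σ_j, and every entry strictly between positions i and j is less than σ_i. Let φ be the permutation obtained from σ by removing the entry σ_j and reinserting it immediately before position i. Then φ is 132-avoiding. -/

import Mathlib

/-- A permutation `σ` of `{0,…,n-1}` is 132-avoiding if there are no indices
`a < b < c` with `σ a < σ c < σ b`. -/
def Avoids132 {n : ℕ} (σ : Equiv.Perm (Fin n)) : Prop :=
  ¬ ∃ a b c : Fin n, a < b ∧ b < c ∧ σ a < σ c ∧ σ c < σ b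

/-- `s` is an occurrence of the pattern `τ` in `σ`: a strictly increasing choice of
positions whose values are order-isomorphic to `τ`. -/
def IsOccurrence {k n : ℕ} (τ : Equiv.Perm (Fin k)) (σ : Equiv.Perm (Fin n))
    (s : Fin k → Fin n) : Prop :=
  StrictMono s ∧ ∀ a b : Fin k, σ (s a) < σ (s b) ↔ τ a < τ b

/-- The number of occurrences of the pattern `τ` in `σ`. -/
noncomputable def numOcc {k n : ℕ} (τ : Equiv.Perm (Fin k)) (σ : Equiv.Perm (Fin n)) : ℕ :=
  Nat.card {s : Fin k → Fin n // IsOccurrence τ σ s}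

open scoped Classical in
/-- `pop n τ` is `A_n(τ)`: the total number of occurrences of the pattern `τ`
over all 132-avoiding permutations of length `n`. -/
noncomputable def pop (n : ℕ) {k : ℕ} (τ : Equiv.Perm (Fin k)) : ℕ :=
  ∑ σ : Equiv.Perm (Fin n), if Avoids132 σ then numOcc τ σ else 0

/-- The move `σ^{σ_j}` is defined at positions `i < j`. -/
def MoveAt {n : ℕ} (σ : Equiv.Perm (Fin n)) (i j : Fin n) : Prop :=
  i < j ∧ σ i < σ j ∧ (∀ a : Fin n, a < i → σ j < σ a) ∧
    (∀ b : Fin n, i < b → b < j → σ b < σ i)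

/-- `φ = σ^{σ_j}`: the move is defined at `i < j` and `φ` is obtained from `σ` by removing
the entry at position `j` and reinserting it immediately before position `i`. -/
def IsShift {n : ℕ} (σ φ : Equiv.Perm (Fin n)) (i j : Fin n) : Prop :=
  MoveAt σ i j ∧
  (∀ t : Fin n, t < i → φ t = σ t) ∧ φ i = σ j ∧
  (∀ t : Fin n, i ≤ t → ∀ h : t < j,
    φ ⟨(t : ℕ) + 1, Nat.lt_of_le_of_lt (Nat.succ_le_of_lt (Fin.lt_def.mp h)) j.isLt⟩ = σ t) ∧
  (∀ t : Fin n, j < t → φ t = σ t)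

/-- The pattern 213 (zero-indexed one-line notation 1,0,2). -/
def p213 : Equiv.Perm (Fin 3) := Equiv.swap 0 1
/-- The pattern 231 (zero-indexed one-line notation 1,2,0). -/
def p231 : Equiv.Perm (Fin 3) := finRotate 3
/-- The pattern 312 (zero-indexed one-line notation 2,0,1). -/
def p312 : Equiv.Perm (Fin 3) := (finRotate 3)⁻¹
/-- The pattern 3241 (zero-indexed one-line notation 2,1,3,0). -/
def p3241 : Equiv.Perm (Fin 4) := ⟨![2,1,3,0], ![3,1,0,2], by decide, by decide⟩
/-- The pattern 3421 (zero-indexed one-line notation 2,3,1,0). -/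
def p3421 : Equiv.Perm (Fin 4) := ⟨![2,3,1,0], ![3,2,0,1], by decide, by decide⟩
/-- The pattern 324, order-isomorphic to 213. -/
def p324 : Equiv.Perm (Fin 3) := Equiv.swap 0 1
/-- The pattern 342, order-isomorphic to 231. -/
def p342 : Equiv.Perm (Fin 3) := finRotate 3
/-- The decreasing pattern of length 2. -/
def p21 : Equiv.Perm (Fin 2) := Equiv.swap 0 1
/-- The increasing pattern of length 2. -/
def p12 : Equiv.Perm (Fin 2) := 1
/-- The single-letter pattern. -/
def p1 : Equiv.Perm (Fin 1) := 1

/-- `Cm m = |S_m(132)|`, the number of 132-avoiding permutations of length `m`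
(the `m`-th Catalan number). -/
noncomputable def Cm (m : ℕ) : ℕ := Nat.card {σ : Equiv.Perm (Fin m) // Avoids132 σ}

/-- Fuelled construction of the binary tree of a sequence: root at the maximum entry,
left/right subtrees built recursively from the parts left/right of the maximum. -/
def toTreeAux : ℕ → List ℕ → BinaryTree Unit
  | 0, _ => BinaryTree.nil
  | _ + 1, [] => BinaryTree.nil
  | fuel + 1, l =>
    let m := l.idxOf (l.foldr max 0)
    BinaryTree.node () (toTreeAux fuel (l.take m)) (toTreeAux fuel (l.drop (m + 1)))

/-- The (unlabelled) binary tree associated to a sequence of distinct naturals. -/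
def toTree (l : List ℕ) : BinaryTree Unit := toTreeAux l.length l

/-- The binary tree `T(σ)` associated to a permutation `σ`. -/
def treeOf {n : ℕ} (σ : Equiv.Perm (Fin n)) : BinaryTree Unit :=
  toTree (List.ofFn fun i => (σ i : ℕ))

/-- Labelled version of `toTreeAux`, storing the value at each vertex. -/
def toTreeLAux : ℕ → List ℕ → BinaryTree ℕ
  | 0, _ => BinaryTree.nil
  | _ + 1, [] => BinaryTree.nil
  | fuel + 1, l =>
    let m := l.idxOf (l.foldr max 0)
    BinaryTree.node (l.foldr max 0) (toTreeLAux fuel (l.take m)) (toTreeLAux fuel (l.drop (m + 1)))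

/-- The labelled binary tree associated to a sequence of distinct naturals. -/
def toTreeL (l : List ℕ) : BinaryTree ℕ := toTreeLAux l.length l

/-- The labelled binary tree `T(σ)` associated to a permutation `σ`, vertices
labelled by the values of `σ`. -/
def treeOfL {n : ℕ} (σ : Equiv.Perm (Fin n)) : BinaryTree ℕ :=
  toTreeL (List.ofFn fun i => (σ i : ℕ))

/-- `spineAux t = (r, S)` where `r` is the number of vertices on the spine through the
root of `t` (following right children) and `S` is the multiset of sizes of all the
other spines (components after deleting all left-child edges). -/
def spineAux {α : Type*} : BinaryTree α → ℕ × Multiset ℕ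
  | BinaryTree.nil => (0, 0)
  | BinaryTree.node _ L R =>
    let aL := spineAux L
    let aR := spineAux R
    (aR.1 + 1, (if aL.1 = 0 then aL.2 else aL.1 ::ₘ aL.2) + aR.2)

/-- The spine structure of a binary tree: the multiset of sizes of the connected
components obtained after deleting every edge joining a left child to its parent. -/
def spineStructure {α : Type*} (t : BinaryTree α) : Multiset ℕ :=
  let a := spineAux t
  if a.1 = 0 then a.2 else a.1 ::ₘ a.2

/-- `RefinementLE b a` means `b ≤_R a` in refinement order: `a` can be obtained from `b`
by merging (nonempty) subsets of its parts. -/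
def RefinementLE (b a : Multiset ℕ) : Prop :=
  ∃ P : Multiset (Multiset ℕ), (∀ m ∈ P, m ≠ 0) ∧ P.sum = b ∧ P.map Multiset.sum = a

/-- The label of the root of a labelled tree, if any. -/
def rootLabel? : BinaryTree ℕ → Option ℕ
  | BinaryTree.nil => none
  | BinaryTree.node v _ _ => some v

/-- `IsParent t p c`: in the labelled tree `t`, the vertex labelled `p` is the parent of
the vertex labelled `c`. -/
def IsParent : BinaryTree ℕ → ℕ → ℕ → Prop
  | BinaryTree.nil, _, _ => False
  | BinaryTree.node v L R, p, c =>
      (p = v ∧ (rootLabel? L = some c ∨ rootLabel? R = some c)) ∨ IsParent L p c ∨ IsParent R p c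

/-- Auxiliary index map: `φ p = σ (shiftIdx i j p)`. -/
def shiftIdx {n : ℕ} (i j : Fin n) (p : Fin n) : Fin n :=
  if p < i then p else if p = i then j
  else if (p : ℕ) ≤ (j : ℕ) then ⟨(p : ℕ) - 1, lt_of_le_of_lt (Nat.sub_le _ _) p.isLt⟩ else p

lemma shiftIdx_spec {n : ℕ} (σ φ : Equiv.Perm (Fin n)) (i j : Fin n)
    (h : IsShift σ φ i j) (p : Fin n) : φ p = σ (shiftIdx i j p) := by
  obtain ⟨⟨hij, _, _, _⟩, h1, h2, h3, h4⟩ := h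
  unfold shiftIdx
  split_ifs with hp1 hp2 hp3
  · exact h1 p hp1
  · rw [hp2]; exact h2
  · have hip : i < p := lt_of_le_of_ne (not_lt.mp hp1) (Ne.symm hp2)
    have hip' : (i : ℕ) < (p : ℕ) := hip
    have hp0 : 0 < (p : ℕ) := Nat.lt_of_le_of_lt (Nat.zero_le _) hip'
    have ht1 : i ≤ (⟨(p : ℕ) - 1, lt_of_le_of_lt (Nat.sub_le _ _) p.isLt⟩ : Fin n) := by
      rw [Fin.le_def]; simp; omega
    have ht2 : (⟨(p : ℕ) - 1, lt_of_le_of_lt (Nat.sub_le _ _) p.isLt⟩ : Fin n) < j := by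
      rw [Fin.lt_def]; simp; omega
    have := h3 _ ht1 ht2
    rw [← this]
    congr 1
    apply Fin.ext
    simp; omega
  · exact h4 p (by rw [Fin.lt_def]; omega)

lemma shiftIdx_mono {n : ℕ} {i j : Fin n} (hij : i < j) {p r : Fin n}
    (hpr : p < r) (hp : p ≠ i) (hr : r ≠ i) : shiftIdx i j p < shiftIdx i j r := by
  have hij' : (i : ℕ) < (j : ℕ) := hij
  have hpr' : (p : ℕ) < (r : ℕ) := hpr
  have hp' : (p : ℕ) ≠ (i : ℕ) := fun e => hp (Fin.ext e)
  have hr' : (r : ℕ) ≠ (i : ℕ) := fun e => hr (Fin.ext e)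
  unfold shiftIdx
  split_ifs with h1 h2 h3 h4 h5 h6 h7 h8 h9 h10 h11 h12 <;>
    simp only [Fin.lt_def, Fin.ext_iff, not_lt, not_le] at * <;> omega

lemma shiftIdx_mem {n : ℕ} {i j : Fin n} (hij : i < j) {p : Fin n} (hp : i < p) :
    (i ≤ shiftIdx i j p ∧ shiftIdx i j p < j) ∨ ((j : ℕ) < (p : ℕ) ∧ shiftIdx i j p = p) := by
  have hij' : (i : ℕ) < (j : ℕ) := hij
  have hp' : (i : ℕ) < (p : ℕ) := hp
  unfold shiftIdx
  split_ifs with h1 h2 h3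
  · exact absurd (Fin.lt_def.mp h1) (by omega)
  · exact absurd (congrArg Fin.val h2) (by omega)
  · left
    constructor
    · rw [Fin.le_def]; simp; omega
    · rw [Fin.lt_def]; simp; omega
  · right; exact ⟨by omega, rfl⟩

/-- the shift move `σ^{σ_j}` of a 132-avoiding permutation is 132-avoiding. -/
theorem shift_avoids132 {n : ℕ} (σ φ : Equiv.Perm (Fin n)) (i j : Fin n)
    (hσ : Avoids132 σ) (h : IsShift σ φ i j) : Avoids132 φ := by
  obtain ⟨⟨hij, hvij, hbef, hbet⟩, h1, h2, h3, h4⟩ := h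
  have hspec := shiftIdx_spec σ φ i j ⟨⟨hij, hvij, hbef, hbet⟩, h1, h2, h3, h4⟩
  rintro ⟨a, b, c, hab, hbc, hac, hcb⟩
  rw [hspec a, hspec c] at hac
  rw [hspec c, hspec b] at hcb
  apply hσ
  by_cases hbi : b = i
  · have hai : a < i := hbi ▸ hab
    have ha : shiftIdx i j a = a := by unfold shiftIdx; rw [if_pos hai]
    have hb : shiftIdx i j b = j := by rw [hbi]; unfold shiftIdx; simp
    rw [ha] at hac
    rw [hb] at hcb
    exact absurd (lt_trans hac hcb) (not_lt.mpr (le_of_lt (hbef a hai)))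
  by_cases hci : c = i
  · have hai : a < i := lt_trans hab (hci ▸ hbc)
    have ha : shiftIdx i j a = a := by unfold shiftIdx; rw [if_pos hai]
    have hc : shiftIdx i j c = j := by rw [hci]; unfold shiftIdx; simp
    rw [ha, hc] at hac
    exact absurd hac (not_lt.mpr (le_of_lt (hbef a hai)))
  by_cases hai : a = i
  · have hav : shiftIdx i j a = j := by rw [hai]; unfold shiftIdx; simp
    rw [hav] at hac
    have hib : i < b := hai ▸ hab
    rcases shiftIdx_mem hij hib with ⟨hb1, hb2⟩ | ⟨hbj, hbeq⟩
    · rcases eq_or_lt_of_le hb1 with he | hlt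
      · rw [← he] at hcb
        exact absurd (lt_trans hac hcb) (not_lt.mpr (le_of_lt hvij))
      · have := hbet _ hlt hb2
        exact absurd (lt_trans (lt_trans hvij (lt_trans hac hcb)) this) (lt_irrefl _)
    · have hcj : (j : ℕ) < (c : ℕ) := lt_trans hbj (Fin.lt_def.mp hbc)
      have hceq : shiftIdx i j c = c := by
        unfold shiftIdx
        have hij' : (i : ℕ) < (j : ℕ) := hij
        rw [if_neg (by rw [Fin.lt_def]; omega), if_neg (fun e => hci e),
          if_neg (by omega)]
      rw [hbeq] at hcb
      rw [hceq] at hac hcb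
      exact ⟨j, b, c, by rw [Fin.lt_def]; omega, hbc, hac, hcb⟩
  · exact ⟨shiftIdx i j a, shiftIdx i j b, shiftIdx i j c,
      shiftIdx_mono hij hab hai hbi, shiftIdx_mono hij hbc hbi hci, hac, hcb⟩
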